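/- Let F : R^d -> R be L-smooth, mu > 0, and define g(w, z) = d * (F(w + mu*z) - F(w - mu*z))/(2*mu) * z. For z1, z2 independently and uniformly sampled from the unit sphere S^d, E[ <g(w, z1), g(w, z2)> ] <= (1 + sqrt(d)) * ||grad F(w)||_2^2 + 2 * L^2 * mu^2 * d^2. -/

import Mathlib

open MeasureTheory

abbrev Euc (d : ℕ) := EuclideanSpace ℝ (Fin d)

/-- The uniform (rotation-invariant) probability measure on the unit sphere in `ℝ^d`. -/
noncomputable def uniformSphere (d : ℕ) :
    Measure (Metric.sphere (0 : Euc d) 1) :=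
  ((volume : Measure (Euc d)).toSphere Set.univ)⁻¹ • (volume : Measure (Euc d)).toSphere

instance uniformSphere_finite (d : ℕ) : IsFiniteMeasure (uniformSphere d) := by
  constructor
  rw [uniformSphere, Measure.smul_apply, smul_eq_mul]
  exact lt_of_le_of_lt (ENNReal.inv_mul_le_one _) ENNReal.one_lt_top

open Metric
open scoped Pointwise


noncomputable def negCoord {d : ℕ} (j : Fin d) : Euc d ≃ₗᵢ[ℝ] Euc d where
  toLinearEquiv :=
  { toFun := fun x => WithLp.toLp 2 fun i => if i = j then -(x i) else x i
    invFun := fun x => WithLp.toLp 2 fun i => if i = j then -(x i) else x i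
    map_add' := by intro x y; ext i; by_cases h : i = j <;> simp [h] <;> ring
    map_smul' := by intro c x; ext i; by_cases h : i = j <;> simp [h] <;> ring
    left_inv := by intro x; ext i; by_cases h : i = j <;> simp [h]
    right_inv := by intro x; ext i; by_cases h : i = j <;> simp [h] }
  norm_map' := by
    intro x
    rw [EuclideanSpace.norm_eq, EuclideanSpace.norm_eq]
    congr 1
    exact Finset.sum_congr rfl fun i _ => by by_cases h : i = j <;> simp [h]

@[simp] lemma negCoord_apply {d : ℕ} (j : Fin d) (x : Euc d) (i : Fin d) :
    negCoord j x i = if i = j then -(x i) else x i := rfl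

noncomputable def permCoord {d : ℕ} (e : Equiv.Perm (Fin d)) : Euc d ≃ₗᵢ[ℝ] Euc d where
  toLinearEquiv :=
  { toFun := fun x => WithLp.toLp 2 fun i => x (e i)
    invFun := fun x => WithLp.toLp 2 fun i => x (e.symm i)
    map_add' := fun x y => rfl
    map_smul' := fun c x => rfl
    left_inv := by intro x; ext i; exact congrArg x.ofLp (e.apply_symm_apply i)
    right_inv := by intro x; ext i; exact congrArg x.ofLp (e.symm_apply_apply i) }
  norm_map' := by
    intro x
    rw [EuclideanSpace.norm_eq, EuclideanSpace.norm_eq]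
    congr 1
    exact Equiv.sum_comp e fun i => ‖x i‖ ^ 2

@[simp] lemma permCoord_apply {d : ℕ} (e : Equiv.Perm (Fin d)) (x : Euc d) (i : Fin d) :
    permCoord e x i = x (e i) := rfl
noncomputable def sphereMap {d : ℕ} (e : Euc d ≃ₗᵢ[ℝ] Euc d) (z : Metric.sphere (0 : Euc d) 1) :
    Metric.sphere (0 : Euc d) 1 :=
  ⟨e z, by
    rw [mem_sphere_zero_iff_norm, e.norm_map]
    exact mem_sphere_zero_iff_norm.mp z.2⟩

@[simp] lemma sphereMap_coe {d : ℕ} (e : Euc d ≃ₗᵢ[ℝ] Euc d)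
    (z : Metric.sphere (0 : Euc d) 1) : (sphereMap e z : Euc d) = e z := rfl

noncomputable def sphereHomeo {d : ℕ} (e : Euc d ≃ₗᵢ[ℝ] Euc d) :
    Metric.sphere (0 : Euc d) 1 ≃ₜ Metric.sphere (0 : Euc d) 1 where
  toFun := sphereMap e
  invFun := sphereMap e.symm
  left_inv := fun z => Subtype.ext (e.symm_apply_apply z)
  right_inv := fun z => Subtype.ext (e.apply_symm_apply z)
  continuous_toFun := (e.continuous.comp continuous_subtype_val).subtype_mk _
  continuous_invFun := (e.symm.continuous.comp continuous_subtype_val).subtype_mk _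

lemma toSphere_map {d : ℕ} (e : Euc d ≃ₗᵢ[ℝ] Euc d) :
    Measure.map (sphereMap e) ((volume : Measure (Euc d)).toSphere)
      = (volume : Measure (Euc d)).toSphere := by
  ext s hs
  have hm : Measurable (sphereMap e) := (sphereHomeo e).continuous.measurable
  rw [Measure.map_apply hm hs, Measure.toSphere_apply' _ (hs.preimage hm),
    Measure.toSphere_apply' _ hs]
  have h1 : (Subtype.val '' (sphereMap e ⁻¹' s) : Set (Euc d)) = e ⁻¹' (Subtype.val '' s) := by
    ext x
    constructor
    · rintro ⟨y, hy, rfl⟩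
      exact ⟨sphereMap e y, hy, rfl⟩
    · rintro ⟨u, hu, hux⟩
      have hx : x ∈ Metric.sphere (0 : Euc d) 1 := by
        rw [mem_sphere_zero_iff_norm, ← e.norm_map, ← hux]
        exact mem_sphere_zero_iff_norm.mp u.2
      refine ⟨⟨x, hx⟩, ?_, rfl⟩
      show sphereMap e ⟨x, hx⟩ ∈ s
      have : sphereMap e ⟨x, hx⟩ = u := Subtype.ext hux.symm
      rw [this]; exact hu
  have h2 : (Set.Ioo (0:ℝ) 1) • (e ⁻¹' (Subtype.val '' s))
      = e ⁻¹' ((Set.Ioo (0:ℝ) 1) • (Subtype.val '' s)) := by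
    ext x
    constructor
    · rintro ⟨r, hr, b, hb, rfl⟩
      exact ⟨r, hr, e b, hb, (e.map_smul r b).symm⟩
    · rintro ⟨r, hr, b, hb, hx⟩
      refine ⟨r, hr, e.symm b, by simp [hb], ?_⟩
      apply e.injective
      rw [e.map_smul]
      rw [e.apply_symm_apply]
      exact hx
  rw [h1, h2]
  congr 1
  exact e.measurePreserving.measure_preimage_emb e.toHomeomorph.measurableEmbedding _

lemma uniformSphere_map {d : ℕ} (e : Euc d ≃ₗᵢ[ℝ] Euc d) :
    Measure.map (sphereMap e) (uniformSphere d) = uniformSphere d := by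
  rw [uniformSphere, Measure.map_smul, toSphere_map]

lemma integral_sphereMap {d : ℕ} (e : Euc d ≃ₗᵢ[ℝ] Euc d) (g : Metric.sphere (0 : Euc d) 1 → ℝ) :
    ∫ z, g (sphereMap e z) ∂(uniformSphere d) = ∫ z, g z ∂(uniformSphere d) := by
  have mp : MeasurePreserving (sphereMap e) (uniformSphere d) (uniformSphere d) :=
    ⟨(sphereHomeo e).continuous.measurable, uniformSphere_map e⟩
  exact mp.integral_comp (sphereHomeo e).measurableEmbedding g

lemma uniformSphere_prob {d : ℕ} (hd : 0 < d) : IsProbabilityMeasure (uniformSphere d) := by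
  constructor
  rw [uniformSphere, Measure.smul_apply, smul_eq_mul]
  refine ENNReal.inv_mul_cancel ?_ ?_
  · rw [Measure.toSphere_apply_univ]
    refine mul_ne_zero ?_ (measure_ball_pos _ _ one_pos).ne'
    simp [finrank_euclideanSpace_fin, hd.ne']
  · rw [Measure.toSphere_apply_univ]
    exact ENNReal.mul_ne_top (ENNReal.natCast_ne_top _) measure_ball_lt_top.ne
lemma sphere_integrable {d : ℕ} {E : Type*} [NormedAddCommGroup E]
    {f : Metric.sphere (0 : Euc d) 1 → E} (hf : Continuous f) :
    Integrable f (uniformSphere d) := by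
  refine hf.integrable_of_hasCompactSupport ?_
  exact IsCompact.of_isClosed_subset isCompact_univ (isClosed_tsupport f) (Set.subset_univ _)

lemma cont_coord {d : ℕ} (i : Fin d) :
    Continuous fun z : Metric.sphere (0 : Euc d) 1 => (z : Euc d) i :=
  (EuclideanSpace.proj (𝕜 := ℝ) i).continuous.comp continuous_subtype_val

lemma moment_off {d : ℕ} {i j : Fin d} (h : i ≠ j) :
    ∫ z : Metric.sphere (0 : Euc d) 1, (z : Euc d) i * (z : Euc d) j ∂(uniformSphere d) = 0 := by
  have key := integral_sphereMap (negCoord j)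
    (fun z : Metric.sphere (0 : Euc d) 1 => (z : Euc d) i * (z : Euc d) j)
  have : ∀ z : Metric.sphere (0 : Euc d) 1,
      ((sphereMap (negCoord j) z : Euc d) i * (sphereMap (negCoord j) z : Euc d) j)
        = -((z : Euc d) i * (z : Euc d) j) := by
    intro z
    rw [sphereMap_coe, negCoord_apply, negCoord_apply, if_neg h, if_pos rfl]
    ring
  simp only [this, integral_neg] at key
  linarith

lemma sum_sq_coords {d : ℕ} (z : Metric.sphere (0 : Euc d) 1) :
    ∑ i, ((z : Euc d) i) ^ 2 = 1 := by
  have hz : ‖(z : Euc d)‖ = 1 := mem_sphere_zero_iff_norm.mp z.2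
  rw [EuclideanSpace.norm_eq] at hz
  have := Real.sqrt_eq_one.mp hz
  simpa [Real.norm_eq_abs, sq_abs] using this

lemma moment_diag {d : ℕ} (hd : 0 < d) (i : Fin d) :
    ∫ z : Metric.sphere (0 : Euc d) 1, ((z : Euc d) i) ^ 2 ∂(uniformSphere d) = 1 / d := by
  haveI := uniformSphere_prob hd
  have hall : ∀ j : Fin d,
      (∫ z : Metric.sphere (0 : Euc d) 1, ((z : Euc d) j) ^ 2 ∂(uniformSphere d))
        = ∫ z : Metric.sphere (0 : Euc d) 1, ((z : Euc d) i) ^ 2 ∂(uniformSphere d) := by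
    intro j
    have key := integral_sphereMap (permCoord (Equiv.swap i j))
      (fun z : Metric.sphere (0 : Euc d) 1 => ((z : Euc d) i) ^ 2)
    have hpt : ∀ z : Metric.sphere (0 : Euc d) 1,
        ((sphereMap (permCoord (Equiv.swap i j)) z : Euc d) i) ^ 2 = ((z : Euc d) j) ^ 2 := by
      intro z
      rw [sphereMap_coe, permCoord_apply, Equiv.swap_apply_left]
    simp only [hpt] at key
    exact key
  have hsum : ∑ j : Fin d,
      (∫ z : Metric.sphere (0 : Euc d) 1, ((z : Euc d) j) ^ 2 ∂(uniformSphere d)) = 1 := by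
    rw [← integral_finset_sum]
    · have : ∀ z : Metric.sphere (0 : Euc d) 1, ∑ j, ((z : Euc d) j) ^ 2 = (1 : ℝ) :=
        sum_sq_coords
      simp only [this]
      simp
    · intro j _
      exact sphere_integrable ((cont_coord j).pow 2)
  rw [Finset.sum_congr rfl (fun j _ => hall j), Finset.sum_const] at hsum
  simp only [Finset.card_univ, Fintype.card_fin, nsmul_eq_mul] at hsum
  field_simp
  rw [mul_comm] at hsum
  exact hsum
lemma vec_moment {d : ℕ} (hd : 0 < d) (x : Euc d) :
    ∫ z : Metric.sphere (0 : Euc d) 1,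
        (inner ℝ x (z : Euc d) : ℝ) • (z : Euc d) ∂(uniformSphere d) = ((d : ℝ)⁻¹) • x := by
  haveI := uniformSphere_prob hd
  have hcont : Continuous fun z : Metric.sphere (0 : Euc d) 1 =>
      (inner ℝ x (z : Euc d) : ℝ) • (z : Euc d) :=
    (continuous_const.inner (𝕜 := ℝ) continuous_subtype_val).smul continuous_subtype_val
  have hint : Integrable (fun z : Metric.sphere (0 : Euc d) 1 =>
      (inner ℝ x (z : Euc d) : ℝ) • (z : Euc d)) (uniformSphere d) := sphere_integrable hcont
  ext i
  have hproj := (EuclideanSpace.proj (𝕜 := ℝ) i).integral_comp_comm hint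
  have lhs_i : (∫ z : Metric.sphere (0 : Euc d) 1,
      (inner ℝ x (z : Euc d) : ℝ) • (z : Euc d) ∂(uniformSphere d)) i
      = ∫ z : Metric.sphere (0 : Euc d) 1,
          (inner ℝ x (z : Euc d) : ℝ) * (z : Euc d) i ∂(uniformSphere d) := by
    calc (∫ z : Metric.sphere (0 : Euc d) 1,
        (inner ℝ x (z : Euc d) : ℝ) • (z : Euc d) ∂(uniformSphere d)) i
        = (EuclideanSpace.proj (𝕜 := ℝ) i) (∫ z : Metric.sphere (0 : Euc d) 1,
            (inner ℝ x (z : Euc d) : ℝ) • (z : Euc d) ∂(uniformSphere d)) := rfl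
      _ = ∫ z : Metric.sphere (0 : Euc d) 1, (EuclideanSpace.proj (𝕜 := ℝ) i)
            ((inner ℝ x (z : Euc d) : ℝ) • (z : Euc d)) ∂(uniformSphere d) := hproj.symm
      _ = _ := by simp [smul_eq_mul]
  rw [lhs_i]
  have hinner : ∀ z : Metric.sphere (0 : Euc d) 1,
      (inner ℝ x (z : Euc d) : ℝ) * (z : Euc d) i
        = ∑ j, x j * ((z : Euc d) j * (z : Euc d) i) := by
    intro z
    rw [PiLp.inner_apply]
    simp only [RCLike.inner_apply, conj_trivial]
    rw [Finset.sum_mul]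
    congr 1
    funext j
    ring
  simp only [hinner]
  rw [integral_finset_sum]
  · have : ∀ j ∈ Finset.univ, (∫ z : Metric.sphere (0 : Euc d) 1,
        x j * ((z : Euc d) j * (z : Euc d) i) ∂(uniformSphere d))
        = if j = i then x i * (1 / d) else 0 := by
      intro j _
      rw [integral_const_mul]
      by_cases h : j = i
      · subst h
        rw [if_pos rfl]
        have : (fun z : Metric.sphere (0 : Euc d) 1 => (z : Euc d) j * (z : Euc d) j)
            = fun z : Metric.sphere (0 : Euc d) 1 => ((z : Euc d) j) ^ 2 := by
          funext z; ring
        rw [this, moment_diag hd]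
      · rw [if_neg h, moment_off h, mul_zero]
    rw [Finset.sum_congr rfl this, Finset.sum_ite_eq' Finset.univ i fun _ => x i * (1/d)]
    simp only [Finset.mem_univ, if_pos]
    show x i * (1 / d) = ((d : ℝ)⁻¹ • x) i
    rw [PiLp.smul_apply, smul_eq_mul]
    ring
  · intro j _
    exact sphere_integrable (continuous_const.mul ((cont_coord j).mul (cont_coord i)))

lemma taylor_bound {d : ℕ} {F : Euc d → ℝ} {L : ℝ} (hL : 0 < L)
    (hF : Differentiable ℝ F)
    (hsmooth : ∀ x y : Euc d, ‖gradient F x - gradient F y‖ ≤ L * ‖x - y‖)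
    (w u : Euc d) :
    |F (w + u) - F w - (inner ℝ (gradient F w) u : ℝ)| ≤ L / 2 * ‖u‖ ^ 2 := by
  have hg_cont : Continuous (gradient F) := by
    have : LipschitzWith (Real.toNNReal L) (gradient F) := by
      refine LipschitzWith.of_dist_le_mul fun x y => ?_
      rw [dist_eq_norm, dist_eq_norm, Real.coe_toNNReal _ hL.le]
      exact hsmooth x y
    exact this.continuous
  have hgrad : ∀ x v, (fderiv ℝ F x) v = (inner ℝ (gradient F x) v : ℝ) := by
    intro x v
    have h2 := (hF x).hasGradientAt.hasFDerivAt
    rw [h2.fderiv]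
    simp [InnerProductSpace.toDual_apply_apply]
  have hder : ∀ t : ℝ, HasDerivAt (fun t : ℝ => F (w + t • u))
      (inner ℝ (gradient F (w + t • u)) u : ℝ) t := by
    intro t
    have h1 : HasFDerivAt F (fderiv ℝ F (w + t • u)) (w + t • u) := (hF _).hasFDerivAt
    have h2 : HasDerivAt (fun t : ℝ => w + t • u) u t := by
      simpa using ((hasDerivAt_id t).smul_const u).const_add w
    have h3 := h1.comp_hasDerivAt t h2
    rw [hgrad] at h3
    exact h3
  have hc : Continuous fun t : ℝ => (inner ℝ (gradient F (w + t • u)) u : ℝ) :=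
    ((hg_cont.comp (continuous_const.add (continuous_id.smul continuous_const))).inner
      continuous_const)
  have key : F (w + u) - F w = ∫ t in (0:ℝ)..1, (inner ℝ (gradient F (w + t • u)) u : ℝ) := by
    have := intervalIntegral.integral_eq_sub_of_hasDerivAt (fun t _ => hder t)
      (hc.intervalIntegrable 0 1)
    rw [this]
    norm_num
  have split : F (w + u) - F w - (inner ℝ (gradient F w) u : ℝ)
      = ∫ t in (0:ℝ)..1, ((inner ℝ (gradient F (w + t • u)) u : ℝ)
          - (inner ℝ (gradient F w) u : ℝ)) := by
    rw [intervalIntegral.integral_sub (hc.intervalIntegrable 0 1)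
      (intervalIntegrable_const), intervalIntegral.integral_const, key]
    simp
  rw [split]
  have hbound : ∀ t ∈ Set.uIoc (0:ℝ) 1,
      ‖(inner ℝ (gradient F (w + t • u)) u : ℝ) - (inner ℝ (gradient F w) u : ℝ)‖
        ≤ L * t * ‖u‖ ^ 2 := by
    intro t ht
    rw [Set.uIoc_of_le zero_le_one] at ht
    rw [← inner_sub_left]
    refine (norm_inner_le_norm _ _).trans ?_
    have h1 : ‖gradient F (w + t • u) - gradient F w‖ ≤ L * (t * ‖u‖) := by
      have := hsmooth (w + t • u) w
      simpa [norm_smul, abs_of_pos ht.1] using this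
    calc ‖gradient F (w + t • u) - gradient F w‖ * ‖u‖
        ≤ L * (t * ‖u‖) * ‖u‖ := by gcongr
      _ = L * t * ‖u‖ ^ 2 := by ring
  have habs : ‖∫ t in (0:ℝ)..1, ((inner ℝ (gradient F (w + t • u)) u : ℝ)
      - (inner ℝ (gradient F w) u : ℝ))‖ ≤ |∫ t in (0:ℝ)..1, L * t * ‖u‖ ^ 2| := by
    refine (intervalIntegral.norm_integral_le_of_norm_le zero_le_one ?_ ?_).trans (le_abs_self _)
    · exact Filter.Eventually.of_forall fun t ht => hbound t (by rwa [Set.uIoc_of_le zero_le_one])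
    · exact Continuous.intervalIntegrable (by fun_prop) 0 1
  have hval : ∫ t in (0:ℝ)..1, L * t * ‖u‖ ^ 2 = L / 2 * ‖u‖ ^ 2 := by
    have heq : (fun t : ℝ => L * t * ‖u‖ ^ 2) = fun t : ℝ => (L * ‖u‖ ^ 2) * t := by
      funext t; ring
    rw [heq, intervalIntegral.integral_const_mul, integral_id]
    ring
  rw [hval] at habs
  rw [← Real.norm_eq_abs]
  refine habs.trans ?_
  rw [abs_of_nonneg (by positivity)]
lemma main_aux {d : ℕ} (hd : 0 < d) (x : Euc d)
    (a : Metric.sphere (0 : Euc d) 1 → ℝ) (hconta : Continuous a)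
    (C : ℝ) (hC : 0 ≤ C)
    (hb : ∀ z : Metric.sphere (0 : Euc d) 1,
      |a z - (d : ℝ) * (inner ℝ x (z : Euc d) : ℝ)| ≤ C) :
    ∫ z1 : Metric.sphere (0 : Euc d) 1, ∫ z2 : Metric.sphere (0 : Euc d) 1,
        (inner ℝ (a z1 • (z1 : Euc d)) (a z2 • (z2 : Euc d)) : ℝ)
        ∂(uniformSphere d) ∂(uniformSphere d) ≤ (‖x‖ + C) ^ 2 := by
  haveI := uniformSphere_prob hd
  have hd' : (0:ℝ) < d := Nat.cast_pos.mpr hd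
  have hfint : Integrable (fun z : Metric.sphere (0 : Euc d) 1 => a z • (z : Euc d))
      (uniformSphere d) := sphere_integrable (hconta.smul continuous_subtype_val)
  set v : Euc d := ∫ z : Metric.sphere (0 : Euc d) 1, a z • (z : Euc d) ∂(uniformSphere d)
    with hv
  have h1 : ∀ z1 : Metric.sphere (0 : Euc d) 1,
      (∫ z2 : Metric.sphere (0 : Euc d) 1,
        (inner ℝ (a z1 • (z1 : Euc d)) (a z2 • (z2 : Euc d)) : ℝ) ∂(uniformSphere d))
      = (inner ℝ (a z1 • (z1 : Euc d)) v : ℝ) :=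
    fun z1 => integral_inner hfint _
  have h2 : ∀ z1 : Metric.sphere (0 : Euc d) 1,
      (inner ℝ (a z1 • (z1 : Euc d)) v : ℝ) = (inner ℝ v (a z1 • (z1 : Euc d)) : ℝ) :=
    fun z1 => real_inner_comm _ _
  have step1 : ∫ z1 : Metric.sphere (0 : Euc d) 1, ∫ z2 : Metric.sphere (0 : Euc d) 1,
      (inner ℝ (a z1 • (z1 : Euc d)) (a z2 • (z2 : Euc d)) : ℝ)
      ∂(uniformSphere d) ∂(uniformSphere d) = (inner ℝ v v : ℝ) := by
    simp_rw [h1, h2]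
    exact integral_inner hfint v
  rw [step1, real_inner_self_eq_norm_sq]
  -- bound ‖v‖
  have hint2 : Integrable (fun z : Metric.sphere (0 : Euc d) 1 =>
      ((d : ℝ) * (inner ℝ x (z : Euc d) : ℝ)) • (z : Euc d)) (uniformSphere d) :=
    sphere_integrable ((continuous_const.mul
      (continuous_const.inner (𝕜 := ℝ) continuous_subtype_val)).smul continuous_subtype_val)
  have hmean : ∫ z : Metric.sphere (0 : Euc d) 1,
      ((d : ℝ) * (inner ℝ x (z : Euc d) : ℝ)) • (z : Euc d) ∂(uniformSphere d) = x := by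
    have heq : (fun z : Metric.sphere (0 : Euc d) 1 =>
        ((d : ℝ) * (inner ℝ x (z : Euc d) : ℝ)) • (z : Euc d))
        = fun z : Metric.sphere (0 : Euc d) 1 =>
            (d : ℝ) • ((inner ℝ x (z : Euc d) : ℝ) • (z : Euc d)) := by
      funext z; rw [smul_smul]
    rw [heq, integral_smul, vec_moment hd x, smul_smul, mul_inv_cancel₀ hd'.ne', one_smul]
  have hdiff : ‖v - x‖ ≤ C := by
    have hsub : v - x = ∫ z : Metric.sphere (0 : Euc d) 1,
        (a z • (z : Euc d) - ((d : ℝ) * (inner ℝ x (z : Euc d) : ℝ)) • (z : Euc d))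
        ∂(uniformSphere d) := by
      rw [integral_sub hfint hint2, hmean]
    rw [hsub]
    have hbd : ∀ z : Metric.sphere (0 : Euc d) 1,
        ‖a z • (z : Euc d) - ((d : ℝ) * (inner ℝ x (z : Euc d) : ℝ)) • (z : Euc d)‖ ≤ C := by
      intro z
      rw [← sub_smul, norm_smul, mem_sphere_zero_iff_norm.mp z.2, mul_one,
        Real.norm_eq_abs]
      exact hb z
    refine (norm_integral_le_of_norm_le (integrable_const C)
      (Filter.Eventually.of_forall hbd)).trans ?_
    simp
  have hnv : ‖v‖ ≤ ‖x‖ + C := by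
    calc ‖v‖ = ‖x + (v - x)‖ := by rw [add_sub_cancel]
      _ ≤ ‖x‖ + ‖v - x‖ := norm_add_le _ _
      _ ≤ ‖x‖ + C := by linarith
  have := norm_nonneg v
  nlinarith [norm_nonneg x]
/-- Cross-term bound for the zero-order estimate with `μ > 0` over independent directions:
`E⟨g(w,z1), g(w,z2)⟩ ≤ (1 + √d)‖∇F(w)‖² + 2L²μ²d²`. -/
theorem stmt13 (d : ℕ) (hd : 0 < d) (F : Euc d → ℝ) (L μ : ℝ) (hμ : 0 < μ) (hL : 0 < L)
    (hF : Differentiable ℝ F)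
    (hsmooth : ∀ x y : Euc d, ‖gradient F x - gradient F y‖ ≤ L * ‖x - y‖) (w : Euc d) :
    ∫ z1 : Metric.sphere (0 : Euc d) 1, ∫ z2 : Metric.sphere (0 : Euc d) 1,
        (inner ℝ (((d : ℝ) * (F (w + μ • (z1 : Euc d)) - F (w - μ • (z1 : Euc d))) / (2 * μ)) •
            (z1 : Euc d))
          (((d : ℝ) * (F (w + μ • (z2 : Euc d)) - F (w - μ • (z2 : Euc d))) / (2 * μ)) •
            (z2 : Euc d)) : ℝ)
        ∂(uniformSphere d) ∂(uniformSphere d)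
      ≤ (1 + Real.sqrt d) * ‖gradient F w‖ ^ 2 + 2 * L ^ 2 * μ ^ 2 * (d : ℝ) ^ 2 := by
  have hd' : (0:ℝ) < d := Nat.cast_pos.mpr hd
  have hFc : Continuous F := hF.continuous
  have hconta : Continuous fun z : Metric.sphere (0 : Euc d) 1 =>
      (d : ℝ) * (F (w + μ • (z : Euc d)) - F (w - μ • (z : Euc d))) / (2 * μ) := by
    refine Continuous.div_const ?_ _
    refine continuous_const.mul ?_
    exact (hFc.comp (continuous_const.add (continuous_subtype_val.const_smul μ))).sub
      (hFc.comp (continuous_const.sub (continuous_subtype_val.const_smul μ)))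
  have hb : ∀ z : Metric.sphere (0 : Euc d) 1,
      |(d : ℝ) * (F (w + μ • (z : Euc d)) - F (w - μ • (z : Euc d))) / (2 * μ)
        - (d : ℝ) * (inner ℝ (gradient F w) (z : Euc d) : ℝ)| ≤ (d : ℝ) * L * μ := by
    intro z
    have hz1 : ‖(z : Euc d)‖ = 1 := mem_sphere_zero_iff_norm.mp z.2
    have hnormu : ‖μ • (z : Euc d)‖ = μ := by
      rw [norm_smul, Real.norm_eq_abs, abs_of_pos hμ, hz1, mul_one]
    set t : ℝ := (inner ℝ (gradient F w) (z : Euc d) : ℝ) with ht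
    have h1 := taylor_bound hL hF hsmooth w (μ • (z : Euc d))
    have h2 := taylor_bound hL hF hsmooth w (-(μ • (z : Euc d)))
    rw [hnormu] at h1
    rw [norm_neg, hnormu] at h2
    rw [real_inner_smul_right] at h1
    rw [inner_neg_right, real_inner_smul_right, ← sub_eq_add_neg] at h2
    rw [← ht] at h1 h2
    have h1' := abs_le.mp h1
    have h2' := abs_le.mp h2
    have h3 : |F (w + μ • (z : Euc d)) - F (w - μ • (z : Euc d)) - 2 * μ * t| ≤ L * μ ^ 2 := by
      rw [abs_le]
      constructor <;> [linarith [h1'.1, h2'.2]; linarith [h1'.2, h2'.1]]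
    have heq : (d : ℝ) * (F (w + μ • (z : Euc d)) - F (w - μ • (z : Euc d))) / (2 * μ)
        - (d : ℝ) * t
        = (d : ℝ) * (F (w + μ • (z : Euc d)) - F (w - μ • (z : Euc d)) - 2 * μ * t)
          / (2 * μ) := by
      field_simp
    rw [heq, abs_div, abs_mul, abs_of_nonneg hd'.le, abs_of_pos (by linarith : (0:ℝ) < 2 * μ),
      div_le_iff₀ (by linarith : (0:ℝ) < 2 * μ)]
    nlinarith [h3, abs_nonneg (F (w + μ • (z : Euc d)) - F (w - μ • (z : Euc d)) - 2 * μ * t)]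
  have key := main_aux hd (gradient F w)
    (fun z : Metric.sphere (0 : Euc d) 1 =>
      (d : ℝ) * (F (w + μ • (z : Euc d)) - F (w - μ • (z : Euc d))) / (2 * μ))
    hconta ((d : ℝ) * L * μ) (by positivity) hb
  refine le_trans key ?_
  have hsq : (1:ℝ) ≤ Real.sqrt d := by
    rw [show (1:ℝ) = Real.sqrt 1 from (Real.sqrt_one).symm]
    exact Real.sqrt_le_sqrt (by exact_mod_cast hd)
  nlinarith [norm_nonneg (gradient F w), sq_nonneg (‖gradient F w‖ - (d:ℝ) * L * μ),
    mul_pos (mul_pos hd' hL) hμ, sq_nonneg (Real.sqrt d)]
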